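/- Let E be a field, p a prime, and E_⟨p⟩ a maximal prime-to-p extension of E inside a separable closure E_s. If F ⊆ E_s is a finite extension of E_⟨p⟩, then [F : E_⟨p⟩] is a power of p. -/

import Mathlib

/-- An intermediate field of a separable closure is a "prime-to-`p` union" if every
element lies in a finite subextension whose degree over the base is prime to `p`. -/
def IsPrimeToPUnion (p : ℕ) (E Es : Type) [Field E] [Field Es] [Algebra E Es]
    (K : IntermediateField E Es) : Prop :=
  ∀ x ∈ K, ∃ L : IntermediateField E Es, L ≤ K ∧ x ∈ L ∧
    FiniteDimensional E L ∧ Nat.Coprime (Module.finrank E L) p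

open IntermediateField Module Polynomial

set_option maxHeartbeats 1000000
set_option synthInstance.maxHeartbeats 400000

/-- Any finite subset of `Ep` is contained in a finite subextension of prime-to-`p` degree. -/
private lemma exists_finite_le_coprime {p : ℕ} {E Es : Type} [Field E] [Field Es] [Algebra E Es]
    [IsSepClosure E Es] {Ep : IntermediateField E Es}
    (hEp : IsPrimeToPUnion p E Es Ep) {S : Set Es} (hfin : S.Finite) (hS : S ⊆ Ep) :
    ∃ L : IntermediateField E Es, L ≤ Ep ∧ S ⊆ L ∧ FiniteDimensional E L ∧
      (Module.finrank E L).Coprime p := by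
  have hint : ∀ x ∈ S, IsIntegral E x := fun x _ => Algebra.IsIntegral.isIntegral x
  haveI : Finite S := hfin
  haveI : FiniteDimensional E (adjoin E S) := finiteDimensional_adjoin hint
  obtain ⟨α, hα⟩ := Field.exists_primitive_element E (↥(adjoin E S))
  obtain ⟨L, hL1, hL2, hL3, hL4⟩ := hEp α.1 (adjoin_le_iff.2 hS α.2)
  refine ⟨L, hL1, fun s hs => ?_, hL3, hL4⟩
  have hML : adjoin E S ≤ L := by
    have h := lift_adjoin_simple E (adjoin E S) α
    rw [hα, lift_top] at h
    rw [h]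
    exact adjoin_le_iff.2 (Set.singleton_subset_iff.2 hL2)
  exact hML (subset_adjoin E S hs)

/-- The key lemma: an element whose degree over `Ep` is prime to `p` lies in `Ep`. -/
private lemma mem_of_coprime {p : ℕ} (hp : p.Prime) {E Es : Type} [Field E] [Field Es]
    [Algebra E Es] [IsSepClosure E Es] {Ep : IntermediateField E Es}
    (hEp : IsPrimeToPUnion p E Es Ep)
    (hmax : ∀ K : IntermediateField E Es, IsPrimeToPUnion p E Es K → Ep ≤ K → K = Ep)
    (x : Es) (hx : (Module.finrank (↥Ep) ↥(adjoin (↥Ep) {x})).Coprime p) : x ∈ Ep := by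
  set Kx := (adjoin (↥Ep) {x}).restrictScalars E with hKxdef
  have hEpK : Ep ≤ Kx := fun a ha => (adjoin (↥Ep) {x}).algebraMap_mem ⟨a, ha⟩
  have hprime : IsPrimeToPUnion p E Es Kx := by
    intro y hy
    have hyx : y ∈ adjoin (↥Ep) {x} := hy
    have hy_int : IsIntegral (↥Ep) y := Algebra.IsIntegral.isIntegral y
    set f := minpoly (↥Ep) y with hf
    have hdvd : finrank (↥Ep) ↥(adjoin (↥Ep) {y}) ∣ finrank (↥Ep) ↥(adjoin (↥Ep) {x}) :=
      ⟨_, (finrank_bot_mul_relfinrank (adjoin_simple_le_iff.2 hyx)).symm⟩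
    have hcop_y : (finrank (↥Ep) ↥(adjoin (↥Ep) {y})).Coprime p :=
      Nat.Coprime.coprime_dvd_left hdvd hx
    have he : finrank (↥Ep) ↥(adjoin (↥Ep) {y}) = f.natDegree := adjoin.finrank hy_int
    set fE : Polynomial Es := f.map (algebraMap (↥Ep) Es) with hfEdef
    have hmonic : f.Monic := minpoly.monic hy_int
    have hfEdeg : fE.natDegree = f.natDegree := hmonic.natDegree_map _
    have hcoe : ∀ i, fE.coeff i ∈ Ep := fun i => by
      rw [hfEdef, coeff_map]; exact (f.coeff i).2
    obtain ⟨L, hL1, hL2, hL3, hL4⟩ := exists_finite_le_coprime hEp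
      (S := (fun i => fE.coeff i) '' Set.Iic f.natDegree) ((Set.finite_Iic _).image _)
      (by rintro _ ⟨i, _, rfl⟩; exact hcoe i)
    have hcoeL : ∀ i, fE.coeff i ∈ L := fun i => by
      by_cases h : i ≤ f.natDegree
      · exact hL2 ⟨i, h, rfl⟩
      · have h0 : fE.coeff i = 0 :=
          coeff_eq_zero_of_natDegree_lt (by rw [hfEdeg]; omega)
        rw [h0]; exact zero_mem L
    have hy_intL : IsIntegral (↥L) y := (Algebra.IsIntegral.isIntegral (R := E) y).tower_top
    set g := minpoly (↥L) y with hg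
    set fL : Polynomial (↥L) := ∑ i ∈ Finset.range (f.natDegree + 1),
        Polynomial.C (⟨fE.coeff i, hcoeL i⟩ : ↥L) * Polynomial.X ^ i with hfLdef
    have hmapfL : fL.map (algebraMap (↥L) Es) = fE := by
      rw [hfLdef, Polynomial.map_sum]
      conv_rhs => rw [fE.as_sum_range' (f.natDegree + 1) (by omega)]
      refine Finset.sum_congr rfl fun i _ => ?_
      rw [Polynomial.map_mul, Polynomial.map_C, Polynomial.map_pow, Polynomial.map_X,
        Polynomial.C_mul_X_pow_eq_monomial]
      rfl
    have hfE0 : fE ≠ 0 := by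
      rw [hfEdef]
      exact (Polynomial.map_ne_zero_iff (algebraMap (↥Ep) Es).injective).2
        (minpoly.ne_zero hy_int)
    have hfE_eval : Polynomial.eval y fE = 0 := by
      rw [hfEdef, Polynomial.eval_map, ← Polynomial.aeval_def, minpoly.aeval]
    have haL : Polynomial.aeval y fL = 0 := by
      rw [Polynomial.aeval_def, Polynomial.eval₂_eq_eval_map, hmapfL, hfE_eval]
    have hdg1 : g.natDegree ≤ f.natDegree := by
      have hfL0 : fL ≠ 0 := fun h => hfE0 (by rw [← hmapfL, h, Polynomial.map_zero])
      have h1 : g.natDegree ≤ fL.natDegree :=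
        Polynomial.natDegree_le_of_dvd (minpoly.dvd (↥L) y haL) hfL0
      have h2 : fL.natDegree = fE.natDegree := by
        rw [← hmapfL]
        exact (Polynomial.natDegree_map_eq_of_injective
          (algebraMap (↥L) Es).injective fL).symm
      omega
    have hdg2 : f.natDegree ≤ g.natDegree := by
      set φ : (↥L) →+* (↥Ep) := (IntermediateField.inclusion hL1).toRingHom with hφ
      have hcomp : (algebraMap (↥Ep) Es).comp φ = algebraMap (↥L) Es := by
        ext a; rfl
      have h0 : Polynomial.aeval y (g.map φ) = 0 := by
        rw [Polynomial.aeval_def, Polynomial.eval₂_map, hcomp, ← Polynomial.aeval_def,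
          minpoly.aeval]
      have hg0 : g.map φ ≠ 0 :=
        (Polynomial.map_ne_zero_iff φ.injective).2 (minpoly.ne_zero hy_intL)
      have h1 : f.natDegree ≤ (g.map φ).natDegree :=
        Polynomial.natDegree_le_of_dvd (minpoly.dvd (↥Ep) y h0) hg0
      rwa [Polynomial.natDegree_map_eq_of_injective φ.injective] at h1
    have hdeg : g.natDegree = f.natDegree := le_antisymm hdg1 hdg2
    set L' := (adjoin (↥L) {y}).restrictScalars E with hL'def
    have hLL' : L ≤ L' := fun a ha => (adjoin (↥L) {y}).algebraMap_mem ⟨a, ha⟩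
    haveI hTfd : FiniteDimensional (↥L) ↥(adjoin (↥L) {y}) := adjoin.finiteDimensional hy_intL
    have hext : extendScalars hLL' = adjoin (↥L) {y} :=
      restrictScalars_injective E (by rw [extendScalars_restrictScalars])
    have hrank : finrank E ↥L' = finrank E ↥L * g.natDegree := by
      have h1 := finrank_bot_mul_relfinrank hLL'
      rw [relfinrank_eq_finrank_of_le hLL', hext, adjoin.finrank hy_intL] at h1
      exact h1.symm
    haveI hfd' : FiniteDimensional E ↥L' := by
      haveI := hL3
      apply FiniteDimensional.of_finrank_pos
      rw [hrank, hdeg]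
      exact Nat.mul_pos Module.finrank_pos (minpoly.natDegree_pos hy_int)
    refine ⟨L', ?_, ?_, hfd', ?_⟩
    · rw [hL'def, restrictScalars_adjoin]
      apply adjoin_le_iff.2
      rintro z (hz | hz)
      · exact hEpK (hL1 hz)
      · rw [Set.mem_singleton_iff] at hz
        rw [hz]; exact hy
    · exact mem_adjoin_simple_self (↥L) y
    · rw [hrank, hdeg, ← he]
      exact hL4.mul hcop_y
  have hKxEp := hmax Kx hprime hEpK
  have hxKx : x ∈ Kx := mem_adjoin_simple_self (↥Ep) x
  rwa [hKxEp] at hxKx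

theorem degree_pow_p_over_maximal_prime_to_p
    (p : ℕ) (hp : p.Prime) (E Es : Type) [Field E] [Field Es] [Algebra E Es]
    [IsSepClosure E Es]
    (Ep : IntermediateField E Es)
    (hEp : IsPrimeToPUnion p E Es Ep)
    (hmax : ∀ K : IntermediateField E Es, IsPrimeToPUnion p E Es K → Ep ≤ K → K = Ep)
    (F : IntermediateField (↥Ep) Es) [FiniteDimensional (↥Ep) F] :
    ∃ n : ℕ, Module.finrank (↥Ep) F = p ^ n := by
  classical
  haveI : IsSepClosure (↥Ep) Es :=
    ⟨IsSepClosure.sep_closed E, Algebra.isSeparable_tower_top_of_isSeparable E (↥Ep) Es⟩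
  haveI := Fact.mk hp
  set M := normalClosure (↥Ep) (↥F) Es with hMdef
  haveI : FiniteDimensional (↥Ep) M := normalClosure.is_finiteDimensional _ _ _
  haveI : IsGalois (↥Ep) M := { }
  set G := (M ≃ₐ[↥Ep] M) with hGdef
  obtain ⟨P⟩ : Nonempty (Sylow p G) := inferInstance
  set K := IntermediateField.fixedField (P : Subgroup G) with hKdef
  have hKM : finrank (↥K) (↥M) = Fintype.card (P : Subgroup G) :=
    by rw [IntermediateField.finrank_fixedField_eq_card]; convert Nat.card_eq_fintype_card
  have hNG : Fintype.card G = finrank (↥Ep) (↥M) := by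
    rw [← IsGalois.card_aut_eq_finrank]; convert (Nat.card_eq_fintype_card).symm
  have htower : finrank (↥Ep) (↥K) * finrank (↥K) (↥M) = finrank (↥Ep) (↥M) :=
    Module.finrank_mul_finrank _ _ _
  have hindex : (P : Subgroup G).index * Fintype.card (P : Subgroup G) = Fintype.card G := by
    rw [← Nat.card_eq_fintype_card, ← Nat.card_eq_fintype_card]
    exact Subgroup.index_mul_card _
  have hcardP : 0 < Fintype.card (P : Subgroup G) := Fintype.card_pos
  have hKd : finrank (↥Ep) (↥K) = (P : Subgroup G).index := by
    apply Nat.eq_of_mul_eq_mul_right hcardP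
    rw [← hKM, htower, ← hNG, ← hindex, hKM]
  have hpindex : ¬ p ∣ (P : Subgroup G).index := P.not_dvd_index
  have hcopK : (finrank (↥Ep) (↥K)).Coprime p := by
    rw [hKd]
    exact Nat.coprime_comm.1 (hp.coprime_iff_not_dvd.2 hpindex)
  have hKbot : K = ⊥ := by
    by_contra hne
    have hlt : (⊥ : IntermediateField (↥Ep) (↥M)) < K := Ne.bot_lt' (Ne.symm hne)
    obtain ⟨z, hzK, hz⟩ := SetLike.exists_of_lt hlt
    set x := algebraMap (↥M) Es z with hxdef
    have hint_z : IsIntegral (↥Ep) z := IsIntegral.of_finite (↥Ep) z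
    have hint_x : IsIntegral (↥Ep) x := Algebra.IsIntegral.isIntegral x
    have hminp : minpoly (↥Ep) x = minpoly (↥Ep) z :=
      minpoly.algebraMap_eq (algebraMap (↥M) Es).injective z
    have hdx : finrank (↥Ep) ↥(adjoin (↥Ep) {x}) = finrank (↥Ep) ↥(adjoin (↥Ep) {z}) := by
      rw [adjoin.finrank hint_x, adjoin.finrank hint_z, hminp]
    have hdvdK : finrank (↥Ep) ↥(adjoin (↥Ep) {z}) ∣ finrank (↥Ep) (↥K) :=
      ⟨_, (finrank_bot_mul_relfinrank (adjoin_simple_le_iff.2 hzK)).symm⟩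
    have hcop : (finrank (↥Ep) ↥(adjoin (↥Ep) {x})).Coprime p := by
      rw [hdx]
      exact Nat.Coprime.coprime_dvd_left hdvdK hcopK
    have hxEp : x ∈ Ep := mem_of_coprime hp hEp hmax x hcop
    apply hz
    rw [IntermediateField.mem_bot]
    refine ⟨⟨x, hxEp⟩, ?_⟩
    apply (algebraMap (↥M) Es).injective
    rw [← IsScalarTower.algebraMap_apply (↥Ep) (↥M) Es]
    rfl
  obtain ⟨n, hn⟩ := IsPGroup.exists_card_eq P.2
  have hKone : finrank (↥Ep) (↥K) = 1 := by rw [hKbot, IntermediateField.finrank_bot]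
  have hN : finrank (↥Ep) (↥M) = p ^ n := by
    rw [← hNG, ← hindex, ← hKd, hKone, one_mul, ← hn, Nat.card_eq_fintype_card]
  have hdvdF : finrank (↥Ep) (↥F) ∣ finrank (↥Ep) (↥M) :=
    ⟨_, (finrank_bot_mul_relfinrank (IntermediateField.le_normalClosure F)).symm⟩
  rw [hN] at hdvdF
  obtain ⟨j, _, hj⟩ := (Nat.dvd_prime_pow hp).1 hdvdF
  exact ⟨j, hj⟩
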